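/- Let D₊, D₋, β₊, β₋ > 0 be positive reals, Δ ∈ ℝ, and m a nonzero integer. Let A⁺ : [0,1] → ℝ and A⁻ : [-1,0] → ℝ solve (A⁺)'' - D₊²·m²·A⁺ = 0 on (0,1), (A⁻)'' - D₋²·m²·A⁻ = 0 on (-1,0), with A⁺(1) = 0, A⁻(-1) = 0, transmission conditions A⁺(0) - A⁻(0) = -Δ and β₊·(A⁺)'(0) = β₋·(A⁻)'(0). Then such a solution pair exists, is unique, and satisfies β₋·(A⁻)'(0) = Δ·( tanh(D₊·m)/(β₊·D₊·m) + tanh(D₋·m)/(β₋·D₋·m) )⁻¹. -/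

import Mathlib

open Set Real

lemma const_of_deriv_zero_Ioo {f : ℝ → ℝ} {a b : ℝ}
    (hf : Differentiable ℝ f) (h : ∀ x ∈ Ioo a b, deriv f x = 0) :
    ∀ x ∈ Icc a b, ∀ y ∈ Icc a b, f x = f y := by
  have hc : ContinuousOn f (Icc a b) := hf.continuous.continuousOn
  have hd : DifferentiableOn ℝ f (interior (Icc a b)) := hf.differentiableOn
  have hmono : MonotoneOn f (Icc a b) :=
    monotoneOn_of_deriv_nonneg (convex_Icc a b) hc hd (fun x hx => by
      rw [interior_Icc] at hx; rw [h x hx])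
  have hanti : AntitoneOn f (Icc a b) :=
    antitoneOn_of_deriv_nonpos (convex_Icc a b) hc hd (fun x hx => by
      rw [interior_Icc] at hx; rw [h x hx])
  intro x hx y hy
  rcases le_total x y with hxy | hxy
  · exact le_antisymm (hmono hx hy hxy) (hanti hx hy hxy)
  · exact (le_antisymm (hmono hy hx hxy) (hanti hy hx hxy)).symm

lemma sinh_hasDerivAt (k p y : ℝ) :
    HasDerivAt (fun x => Real.sinh (k * (x - p))) (Real.cosh (k * (y - p)) * k) y := by
  have h1 : HasDerivAt (fun x : ℝ => k * (x - p)) (k * 1) y :=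
    ((hasDerivAt_id y).sub_const p).const_mul k
  simpa [Function.comp_def] using (Real.hasDerivAt_sinh (k * (y - p))).comp y h1

lemma cosh_hasDerivAt (k p y : ℝ) :
    HasDerivAt (fun x => Real.cosh (k * (x - p))) (Real.sinh (k * (y - p)) * k) y := by
  have h1 : HasDerivAt (fun x : ℝ => k * (x - p)) (k * 1) y :=
    ((hasDerivAt_id y).sub_const p).const_mul k
  simpa [Function.comp_def] using (Real.hasDerivAt_cosh (k * (y - p))).comp y h1

lemma ode_rep {k a b p : ℝ} (hk : k ≠ 0) (hp : p ∈ Icc a b) {u : ℝ → ℝ}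
    (hu : ContDiff ℝ 2 u)
    (hode : ∀ y ∈ Ioo a b, deriv (deriv u) y - k ^ 2 * u y = 0)
    (hup : u p = 0) :
    ∀ y ∈ Icc a b, u y = deriv u p / k * Real.sinh (k * (y - p)) ∧
      deriv u y = deriv u p * Real.cosh (k * (y - p)) := by
  have h2 : ContDiff ℝ (1 + 1) u := by norm_num at hu ⊢; exact hu
  obtain ⟨hud, hdu⟩ := contDiff_succ_iff_deriv.mp h2
  have hdud : Differentiable ℝ (deriv u) := hdu.2.differentiable one_ne_zero
  set W1 : ℝ → ℝ := fun y => deriv u y * Real.sinh (k * (y - p)) - k * (u y * Real.cosh (k * (y - p))) with hW1def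
  set W2 : ℝ → ℝ := fun y => deriv u y * Real.cosh (k * (y - p)) - k * (u y * Real.sinh (k * (y - p))) with hW2def
  have hW1 : ∀ y, HasDerivAt W1 ((deriv (deriv u) y - k ^ 2 * u y) * Real.sinh (k * (y - p))) y := by
    intro y
    have h := (((hdud y).hasDerivAt.mul (sinh_hasDerivAt k p y)).sub
      (((hud y).hasDerivAt.mul (cosh_hasDerivAt k p y)).const_mul k))
    convert h using 1
    · rfl
    · rfl
    · rfl
    · ring
  have hW2 : ∀ y, HasDerivAt W2 ((deriv (deriv u) y - k ^ 2 * u y) * Real.cosh (k * (y - p))) y := by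
    intro y
    have h := (((hdud y).hasDerivAt.mul (cosh_hasDerivAt k p y)).sub
      (((hud y).hasDerivAt.mul (sinh_hasDerivAt k p y)).const_mul k))
    convert h using 1
    · rfl
    · rfl
    · rfl
    · ring
  have hW1c : ∀ y ∈ Icc a b, W1 y = 0 := by
    intro y hy
    have := const_of_deriv_zero_Ioo (fun x => (hW1 x).differentiableAt)
      (fun x hx => by rw [(hW1 x).deriv, hode x hx, zero_mul]) y hy p hp
    simpa [hW1def, hup] using this
  have hW2c : ∀ y ∈ Icc a b, W2 y = deriv u p := by
    intro y hy
    have := const_of_deriv_zero_Ioo (fun x => (hW2 x).differentiableAt)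
      (fun x hx => by rw [(hW2 x).deriv, hode x hx, zero_mul]) y hy p hp
    simpa [hW2def, hup] using this
  intro y hy
  have e1 := hW1c y hy
  have e2 := hW2c y hy
  simp only [hW1def, hW2def] at e1 e2
  have hcs : Real.cosh (k * (y - p)) ^ 2 - Real.sinh (k * (y - p)) ^ 2 = 1 :=
    Real.cosh_sq_sub_sinh_sq _
  constructor
  · field_simp
    linear_combination Real.sinh (k * (y - p)) * e2 - Real.cosh (k * (y - p)) * e1
      - (k * u y) * hcs
  · linear_combination Real.cosh (k * (y - p)) * e2 - Real.sinh (k * (y - p)) * e1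
      - deriv u y * hcs

lemma tanh_div_pos {x : ℝ} (hx : x ≠ 0) : 0 < Real.tanh x / x := by
  rw [Real.tanh_eq_sinh_div_cosh, div_div]
  rcases hx.lt_or_gt with h | h
  · have hs : Real.sinh x < 0 := by
      have := Real.sinh_lt_sinh.mpr h
      simpa using this
    apply div_pos_iff.mpr
    right
    constructor
    · exact hs
    · nlinarith [Real.cosh_pos x]
  · have hs : 0 < Real.sinh x := Real.sinh_pos_iff.mpr h
    exact div_pos hs (mul_pos (Real.cosh_pos x) h)

def IsTransSol (Dp Dn βp βn Δ : ℝ) (m : ℤ) (Ap An : ℝ → ℝ) : Prop :=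
  ContDiff ℝ 2 Ap ∧ ContDiff ℝ 2 An ∧
  (∀ y ∈ Set.Ioo (0:ℝ) 1,
    deriv (deriv Ap) y - Dp ^ 2 * (m : ℝ) ^ 2 * Ap y = 0) ∧
  (∀ y ∈ Set.Ioo (-1:ℝ) 0,
    deriv (deriv An) y - Dn ^ 2 * (m : ℝ) ^ 2 * An y = 0) ∧
  Ap 1 = 0 ∧ An (-1) = 0 ∧ Ap 0 - An 0 = -Δ ∧
  βp * deriv Ap 0 = βn * deriv An 0

theorem stmt_4 (Dp Dn βp βn : ℝ) (hDp : 0 < Dp) (hDn : 0 < Dn)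
    (hβp : 0 < βp) (hβn : 0 < βn) (Δ : ℝ) (m : ℤ) (hm : m ≠ 0) :
    (∃ Ap An : ℝ → ℝ, IsTransSol Dp Dn βp βn Δ m Ap An) ∧
    (∀ Ap An Ap' An' : ℝ → ℝ, IsTransSol Dp Dn βp βn Δ m Ap An →
      IsTransSol Dp Dn βp βn Δ m Ap' An' →
      (∀ y ∈ Set.Icc (0:ℝ) 1, Ap y = Ap' y) ∧
      (∀ y ∈ Set.Icc (-1:ℝ) 0, An y = An' y)) ∧
    (∀ Ap An : ℝ → ℝ, IsTransSol Dp Dn βp βn Δ m Ap An →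
      βn * deriv An 0 = Δ *
        (Real.tanh (Dp * (m : ℝ)) / (βp * (Dp * (m : ℝ)))
          + Real.tanh (Dn * (m : ℝ)) / (βn * (Dn * (m : ℝ))))⁻¹) := by
  have hmne : (m : ℝ) ≠ 0 := Int.cast_ne_zero.mpr hm
  set kp : ℝ := Dp * (m : ℝ) with hkp_def
  set kn : ℝ := Dn * (m : ℝ) with hkn_def
  have hkp : kp ≠ 0 := mul_ne_zero hDp.ne' hmne
  have hkn : kn ≠ 0 := mul_ne_zero hDn.ne' hmne
  set S : ℝ := Real.tanh kp / (βp * kp) + Real.tanh kn / (βn * kn) with hS_def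
  have hS : 0 < S := by
    have h1 : Real.tanh kp / (βp * kp) = Real.tanh kp / kp / βp := by ring
    have h2 : Real.tanh kn / (βn * kn) = Real.tanh kn / kn / βn := by ring
    rw [hS_def, h1, h2]
    exact add_pos (div_pos (tanh_div_pos hkp) hβp) (div_pos (tanh_div_pos hkn) hβn)
  have hSdef : S = Real.sinh kp / Real.cosh kp / (βp * kp)
      + Real.sinh kn / Real.cosh kn / (βn * kn) := by
    rw [hS_def, Real.tanh_eq_sinh_div_cosh, Real.tanh_eq_sinh_div_cosh]
  set cp : ℝ := Δ / S / (βp * kp * Real.cosh kp) with hcp_def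
  set cn : ℝ := Δ / S / (βn * kn * Real.cosh kn) with hcn_def
  have hcoshp := Real.cosh_pos kp
  have hcoshn := Real.cosh_pos kn
  have hSmul : S * (βp * kp * Real.cosh kp) * (βn * kn * Real.cosh kn)
      = Real.sinh kp * (βn * kn * Real.cosh kn) + Real.sinh kn * (βp * kp * Real.cosh kp) := by
    rw [hSdef]
    field_simp
  have hXne : (βp * kp * Real.cosh kp) * (βn * kn * Real.cosh kn) ≠ 0 :=
    mul_ne_zero (mul_ne_zero (mul_ne_zero hβp.ne' hkp) hcoshp.ne')
      (mul_ne_zero (mul_ne_zero hβn.ne' hkn) hcoshn.ne')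
  -- characterization of any solution
  have char : ∀ Ap An : ℝ → ℝ, IsTransSol Dp Dn βp βn Δ m Ap An →
      (∀ y ∈ Icc (0:ℝ) 1, Ap y = cp * Real.sinh (kp * (y - 1))) ∧
      (∀ y ∈ Icc (-1:ℝ) 0, An y = cn * Real.sinh (kn * (y + 1))) ∧
      βn * deriv An 0 = Δ / S := by
    rintro Ap An ⟨hAp2, hAn2, hodep, hoden, hAp1, hAn1, hjump, hflux⟩
    have repp := ode_rep (k := kp) (a := 0) (b := 1) (p := 1) hkp (by norm_num) hAp2
      (fun y hy => by linear_combination hodep y hy) hAp1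
    have repn := ode_rep (k := kn) (a := -1) (b := 0) (p := -1) hkn (by norm_num) hAn2
      (fun y hy => by linear_combination hoden y hy) hAn1
    set Cp := deriv Ap 1 with hCp_def
    set Cn := deriv An (-1) with hCn_def
    have h0p := repp 0 (by norm_num)
    have h0n := repn 0 (by norm_num)
    rw [show kp * ((0:ℝ) - 1) = -kp by ring, Real.sinh_neg, Real.cosh_neg] at h0p
    rw [show kn * ((0:ℝ) - -1) = kn by ring] at h0n
    have E1 : Cp / kp * -Real.sinh kp - Cn / kn * Real.sinh kn = -Δ := by
      rw [← h0p.1, ← h0n.1]; exact hjump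
    have E2 : βp * (Cp * Real.cosh kp) = βn * (Cn * Real.cosh kn) := by
      rw [← h0p.2, ← h0n.2]; exact hflux
    clear_value kp kn S cp cn
    have E1m : Cp * kn * Real.sinh kp + Cn * kp * Real.sinh kn = Δ * (kp * kn) := by
      field_simp at E1
      linear_combination -E1
    have hV : βn * (Cn * Real.cosh kn) * S = Δ := by
      apply mul_right_cancel₀ hXne
      linear_combination (βn * (Cn * Real.cosh kn)) * hSmul
        - (Real.sinh kp * βn * kn * Real.cosh kn) * E2
        + (βp * βn * Real.cosh kp * Real.cosh kn) * E1m
    have hCnc : Cn / kn = cn := by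
      rw [hcn_def, ← hV]
      field_simp
    have hCpc : Cp / kp = cp := by
      rw [hcp_def, ← hV, ← E2]
      field_simp
    refine ⟨fun y hy => by rw [(repp y hy).1, hCpc], fun y hy => ?_, ?_⟩
    · have := (repn y hy).1
      rw [show kn * (y - -1) = kn * (y + 1) by ring] at this
      rw [this, hCnc]
    · rw [h0n.2, eq_div_iff hS.ne']
      linear_combination hV
  clear_value kp kn S cp cn
  have key : cp * Real.sinh kp + cn * Real.sinh kn = Δ := by
    have hSne : S ≠ 0 := hS.ne'
    rw [hcp_def, hcn_def]
    field_simp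
    linear_combination (-Δ) * hSmul
  refine ⟨?_, ?_, ?_⟩
  · -- existence
    refine ⟨fun y => cp * Real.sinh (kp * (y - 1)), fun y => cn * Real.sinh (kn * (y - -1)), ?_⟩
    have hdp : ∀ y, HasDerivAt (fun y => cp * Real.sinh (kp * (y - 1)))
        (cp * (Real.cosh (kp * (y - 1)) * kp)) y :=
      fun y => (sinh_hasDerivAt kp 1 y).const_mul cp
    have hdn : ∀ y, HasDerivAt (fun y => cn * Real.sinh (kn * (y - -1)))
        (cn * (Real.cosh (kn * (y - -1)) * kn)) y :=
      fun y => (sinh_hasDerivAt kn (-1) y).const_mul cn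
    have hdp' : deriv (fun y => cp * Real.sinh (kp * (y - 1)))
        = fun y => cp * (Real.cosh (kp * (y - 1)) * kp) := funext fun y => (hdp y).deriv
    have hdn' : deriv (fun y => cn * Real.sinh (kn * (y - -1)))
        = fun y => cn * (Real.cosh (kn * (y - -1)) * kn) := funext fun y => (hdn y).deriv
    have hddp : ∀ y, deriv (deriv (fun y => cp * Real.sinh (kp * (y - 1)))) y
        = cp * (Real.sinh (kp * (y - 1)) * kp * kp) := by
      intro y
      rw [hdp']
      have h : HasDerivAt (fun y => cp * (Real.cosh (kp * (y - 1)) * kp))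
          (cp * (Real.sinh (kp * (y - 1)) * kp * kp)) y := by
        have h2 := ((cosh_hasDerivAt kp 1 y).mul_const kp).const_mul cp
        convert h2 using 1
      exact h.deriv
    have hddn : ∀ y, deriv (deriv (fun y => cn * Real.sinh (kn * (y - -1)))) y
        = cn * (Real.sinh (kn * (y - -1)) * kn * kn) := by
      intro y
      rw [hdn']
      have h : HasDerivAt (fun y => cn * (Real.cosh (kn * (y - -1)) * kn))
          (cn * (Real.sinh (kn * (y - -1)) * kn * kn)) y := by
        have h2 := ((cosh_hasDerivAt kn (-1) y).mul_const kn).const_mul cn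
        convert h2 using 1
      exact h.deriv
    refine ⟨?_, ?_, ?_, ?_, ?_, ?_, ?_, ?_⟩
    · exact contDiff_const.mul (Real.contDiff_sinh.comp
        (contDiff_const.mul (contDiff_id.sub contDiff_const)))
    · exact contDiff_const.mul (Real.contDiff_sinh.comp
        (contDiff_const.mul (contDiff_id.sub contDiff_const)))
    · intro y _
      rw [hddp y, hkp_def]
      ring
    · intro y _
      rw [hddn y, hkn_def]
      ring
    · norm_num
    · norm_num
    · show cp * Real.sinh (kp * ((0:ℝ) - 1)) - cn * Real.sinh (kn * ((0:ℝ) - -1)) = -Δ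
      rw [show kp * ((0:ℝ) - 1) = -kp by ring, show kn * ((0:ℝ) - -1) = kn by ring,
        Real.sinh_neg]
      linear_combination -key
    · rw [hdp', hdn']
      show βp * (cp * (Real.cosh (kp * ((0:ℝ) - 1)) * kp))
          = βn * (cn * (Real.cosh (kn * ((0:ℝ) - -1)) * kn))
      rw [show kp * ((0:ℝ) - 1) = -kp by ring, show kn * ((0:ℝ) - -1) = kn by ring,
        Real.cosh_neg, hcp_def, hcn_def]
      field_simp
  · -- uniqueness
    intro Ap An Ap' An' h h'
    obtain ⟨c1, c2, -⟩ := char Ap An h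
    obtain ⟨c1', c2', -⟩ := char Ap' An' h'
    exact ⟨fun y hy => by rw [c1 y hy, c1' y hy],
      fun y hy => by rw [c2 y hy, c2' y hy]⟩
  · intro Ap An h
    obtain ⟨-, -, c3⟩ := char Ap An h
    rw [c3, div_eq_mul_inv]
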